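/- Let j ≥ 0 and n = 2j + 2. Let A be the n-by-n block matrix on ℂ² ⊕ ⋯ ⊕ ℂ² (j + 1 copies of ℂ²) whose (ℓ, ℓ+1) block is I₂ for 1 ≤ ℓ ≤ j − 1, whose (j, j+1) block is B = [[1, 0], [0, 1/√2]], whose (j+1, j+1) block is C = [[0, 1/√2], [0, 0]], and all of whose other blocks are zero. Then p(A) = j and a(A) = j + 2. -/

import Mathlib

open Matrix

noncomputable section

/-- An `ι`-by-`ι` complex matrix `A` is a *partial isometry* if `‖Ax‖ = ‖x‖` for every
vector `x` in the orthogonal complement of `ker A` (Euclidean structure). -/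
def Matrix.IsPartialIsometry {ι : Type*} [Fintype ι] [DecidableEq ι]
    (A : Matrix ι ι ℂ) : Prop :=
  ∀ x ∈ (LinearMap.ker (Matrix.toEuclideanLin A))ᗮ, ‖Matrix.toEuclideanLin A x‖ = ‖x‖

/-- The *power partial isometry index* `p(A)`: the supremum (in `ℕ∞`, possibly `⊤`) of the
nonnegative integers `j` such that `I, A, A², …, A^j` are all partial isometries. -/
def Matrix.pIndex {ι : Type*} [Fintype ι] [DecidableEq ι] (A : Matrix ι ι ℂ) : ℕ∞ :=
  sSup ((↑) '' {j : ℕ | ∀ i ≤ j, (A ^ i).IsPartialIsometry})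

/-- The *ascent* `a(A)`: the smallest nonnegative integer `k` with `ker A^k = ker A^(k+1)`. -/
def Matrix.ascent {ι : Type*} [Fintype ι] [DecidableEq ι] (A : Matrix ι ι ℂ) : ℕ :=
  sInf {k : ℕ | LinearMap.ker (Matrix.toEuclideanLin (A ^ k)) =
    LinearMap.ker (Matrix.toEuclideanLin (A ^ (k + 1)))}

/-- `A` is unitarily similar to `B` (allowing different, necessarily equipotent, index types):
`B = U* A U` for some unitary `U`. -/
def Matrix.UnitarilySimilarTo {ι κ : Type*} [Fintype ι] [Fintype κ] [DecidableEq ι]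
    [DecidableEq κ] (A : Matrix ι ι ℂ) (B : Matrix κ κ ℂ) : Prop :=
  ∃ U : Matrix ι κ ℂ, Uᴴ * U = 1 ∧ U * Uᴴ = 1 ∧ B = Uᴴ * A * U

/-- The `q`-by-`q` nilpotent Jordan block `J_q`. -/
def JordanBlock (q : ℕ) : Matrix (Fin q) (Fin q) ℂ :=
  Matrix.of fun a b => if (b : ℕ) = (a : ℕ) + 1 then 1 else 0

/-- `A` is of class `S_n`: a contraction whose eigenvalues all have moduli strictly
less than `1` and with `rank (1 - A*A) = 1`. -/
def Matrix.IsClassSn {n : ℕ} (A : Matrix (Fin n) (Fin n) ℂ) : Prop :=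
  (∀ x : EuclideanSpace ℂ (Fin n), ‖Matrix.toEuclideanLin A x‖ ≤ ‖x‖) ∧
  (∀ z ∈ spectrum ℂ A, ‖z‖ < 1) ∧
  (1 - Aᴴ * A).rank = 1


/-- The `n`-by-`n` (`n = 2j + 2`) block matrix on `j + 1` copies of `ℂ²` (the copies indexed by
`Fin (j + 1)`, so that block row/column `ℓ` of the paper is index `ℓ - 1` here) whose
`(ℓ, ℓ + 1)` block is `I₂` for `1 ≤ ℓ ≤ j - 1`, whose `(j, j + 1)` block is
`B = !![1, 0; 0, 1/√2]`, whose `(j + 1, j + 1)` block is `C = !![0, 1/√2; 0, 0]`, and all of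
whose other blocks are zero. -/
noncomputable def exampleMatrix (j : ℕ) :
    Matrix (Fin (j + 1) × Fin 2) (Fin (j + 1) × Fin 2) ℂ :=
  Matrix.of fun pa qb =>
    if (pa.1 : ℕ) = j ∧ (qb.1 : ℕ) = j then
      (!![0, 1 / (Real.sqrt 2 : ℂ); 0, 0]) pa.2 qb.2
    else if (qb.1 : ℕ) = (pa.1 : ℕ) + 1 then
      (if (qb.1 : ℕ) = j then (!![1, 0; 0, 1 / (Real.sqrt 2 : ℂ)]) pa.2 qb.2
       else (1 : Matrix (Fin 2) (Fin 2) ℂ) pa.2 qb.2)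
    else 0

def cc : ℂ := 1 / (Real.sqrt 2 : ℂ)

lemma mv_last (j : ℕ) (x : Fin (j+1) × Fin 2 → ℂ) (a : Fin 2) :
    (exampleMatrix j *ᵥ x) (Fin.last j, a) =
      if a = 0 then cc * x (Fin.last j, 1) else 0 := by
  rw [Matrix.mulVec, dotProduct, Fintype.sum_prod_type]
  rw [Finset.sum_eq_single (Fin.last j)]
  · rw [Fin.sum_univ_two]
    fin_cases a <;> simp [exampleMatrix, cc]
  · intro q _ hq
    have hq' : (q : ℕ) ≠ j := fun h => hq (Fin.eq_of_val_eq (by simp [h]))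
    apply Finset.sum_eq_zero
    intro b _
    simp [exampleMatrix, hq', Fin.val_last]
    omega
  · simp

lemma mv_mid (j : ℕ) (x : Fin (j+1) × Fin 2 → ℂ) (p : Fin (j+1)) (hp : (p : ℕ) + 1 = j)
    (a : Fin 2) :
    (exampleMatrix j *ᵥ x) (p, a) =
      if a = 0 then x (Fin.last j, 0) else cc * x (Fin.last j, 1) := by
  rw [Matrix.mulVec, dotProduct, Fintype.sum_prod_type]
  rw [Finset.sum_eq_single (Fin.last j)]
  · rw [Fin.sum_univ_two]
    have hpj : (p : ℕ) ≠ j := by omega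
    fin_cases a <;> simp [exampleMatrix, cc, hpj, hp]
  · intro q _ hq
    have hq' : (q : ℕ) ≠ j := fun h => hq (Fin.eq_of_val_eq (by simp [h]))
    apply Finset.sum_eq_zero
    intro b _
    simp [exampleMatrix, hq', Fin.val_last]
    omega
  · simp

lemma mv_lo (j : ℕ) (x : Fin (j+1) × Fin 2 → ℂ) (p : Fin (j+1)) (hp : (p : ℕ) + 1 < j)
    (a : Fin 2) :
    (exampleMatrix j *ᵥ x) (p, a) = x (⟨(p : ℕ) + 1, by omega⟩, a) := by
  rw [Matrix.mulVec, dotProduct, Fintype.sum_prod_type]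
  rw [Finset.sum_eq_single (⟨(p : ℕ) + 1, by omega⟩ : Fin (j+1))]
  · rw [Fin.sum_univ_two]
    have hpj : (p : ℕ) ≠ j := by omega
    have h1 : ((p : ℕ) + 1) ≠ j := by omega
    fin_cases a <;> simp [exampleMatrix, Matrix.one_apply, hpj, h1]
  · intro q _ hq
    have hq' : (q : ℕ) ≠ (p : ℕ) + 1 := fun h => hq (Fin.eq_of_val_eq (by simp [h]))
    apply Finset.sum_eq_zero
    intro b _
    simp [exampleMatrix, hq']
    omega
  · simp

lemma cc_norm_sq : ‖cc‖^2 = 1/2 := by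
  have h2 : (0:ℝ) ≤ 2 := by norm_num
  simp [cc, norm_div, Complex.norm_real, Real.sqrt_nonneg, abs_of_nonneg]

lemma key_sum (j : ℕ) (x : Fin (j+1) × Fin 2 → ℂ)
    (hx : ∀ b : Fin 2, x (0, b) = 0) :
    ∑ i : Fin (j+1) × Fin 2, ‖(exampleMatrix j *ᵥ x) i‖^2 =
      ∑ i : Fin (j+1) × Fin 2, ‖x i‖^2 := by
  have hccz : ∀ z : ℂ, ‖cc * z‖^2 = 1/2 * ‖z‖^2 := by
    intro z; rw [norm_mul, mul_pow, cc_norm_sq]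
  rw [Fintype.sum_prod_type, Fintype.sum_prod_type]
  simp only [Fin.sum_univ_two]
  rcases j with _ | m
  · rw [Fin.sum_univ_one, Fin.sum_univ_one]
    simp only [show (0 : Fin 1) = Fin.last 0 from rfl]
    rw [mv_last 0 x 0, mv_last 0 x 1]
    simp [hx 1, hx 0, show x 0 = 0 from hx 0]
  · set A := exampleMatrix (m+1)
    set y : Fin (m+2) × Fin 2 → ℂ := A *ᵥ x with hy
    rw [Fin.sum_univ_castSucc (n := m+1), Fin.sum_univ_castSucc (n := m)]
    rw [Fin.sum_univ_succ (n := m+1), Fin.sum_univ_castSucc (n := m)]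
    have hx0 : ‖x (0,0)‖^2 + ‖x (0,1)‖^2 = 0 := by
      rw [hx 0, hx 1]; simp
    have hglast : ‖y (Fin.last (m+1), 0)‖^2 + ‖y (Fin.last (m+1), 1)‖^2 =
        1/2 * ‖x (Fin.last (m+1), 1)‖^2 := by
      rw [hy, mv_last (m+1) x 0, mv_last (m+1) x 1]
      rw [if_pos rfl, if_neg (by decide), hccz]
      simp
    have hgmid : ‖y (Fin.castSucc (Fin.last m), 0)‖^2 + ‖y (Fin.castSucc (Fin.last m), 1)‖^2 =
        ‖x (Fin.last (m+1), 0)‖^2 + 1/2 * ‖x (Fin.last (m+1), 1)‖^2 := by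
      rw [hy, mv_mid (m+1) x _ (by simp) 0, mv_mid (m+1) x _ (by simp) 1]
      rw [if_pos rfl, if_neg (by decide), hccz]
    have hmain : ∀ p : Fin m,
        ‖y (Fin.castSucc (Fin.castSucc p), 0)‖^2 + ‖y (Fin.castSucc (Fin.castSucc p), 1)‖^2 =
        ‖x (Fin.succ (Fin.castSucc p), 0)‖^2 + ‖x (Fin.succ (Fin.castSucc p), 1)‖^2 := by
      intro p
      have hplt := p.isLt
      have hp : ((Fin.castSucc (Fin.castSucc p) : Fin (m+2)) : ℕ) + 1 < m + 1 := by
        simp only [Fin.coe_castSucc]; omega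
      rw [hy, mv_lo (m+1) x _ hp 0, mv_lo (m+1) x _ hp 1]
      have hidx : (⟨((Fin.castSucc (Fin.castSucc p) : Fin (m+2)) : ℕ) + 1, by
          simp only [Fin.coe_castSucc]; omega⟩ :
          Fin (m+2)) = Fin.succ (Fin.castSucc p) := by ext; simp
      rw [hidx]
    rw [Finset.sum_congr rfl (fun p _ => hmain p)]
    have hsucclast : (Fin.succ (Fin.last m) : Fin (m+2)) = Fin.last (m+1) := by ext; simp
    rw [hsucclast, hglast, hgmid, hx0]
    ring

lemma supp_lt (j m : ℕ) (hm : m ≤ j) (x : Fin (j+1) × Fin 2 → ℂ)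
    (hx : ∀ (q : Fin (j+1)) (b : Fin 2), (q : ℕ) < m → x (q, b) = 0) :
    ∀ (q : Fin (j+1)) (b : Fin 2), (q : ℕ) + 1 < m → (exampleMatrix j *ᵥ x) (q, b) = 0 := by
  intro q b hq
  rw [mv_lo j x q (by omega) b]
  exact hx _ _ (by simp; omega)

lemma supp_ge (j m : ℕ) (hm : m ≤ j) (x : Fin (j+1) × Fin 2 → ℂ)
    (hx : ∀ (q : Fin (j+1)) (b : Fin 2), m ≤ (q : ℕ) → x (q, b) = 0) :
    ∀ (q : Fin (j+1)) (b : Fin 2), m ≤ (q : ℕ) + 1 → (exampleMatrix j *ᵥ x) (q, b) = 0 := by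
  intro q b hq
  have hlast : ∀ b : Fin 2, x (Fin.last j, b) = 0 := fun b => hx _ _ (by simp [Fin.val_last]; omega)
  rcases Nat.lt_trichotomy ((q : ℕ) + 1) j with h | h | h
  · rw [mv_lo j x q h b]; exact hx _ _ (by simp; omega)
  · rw [mv_mid j x q h b]
    rcases Fin.exists_fin_two.mp ⟨b, rfl⟩ with _ | _ <;> fin_cases b <;> simp [hlast]
  · have hqj : (q : ℕ) = j := by omega
    have : q = Fin.last j := Fin.eq_of_val_eq (by simpa using hqj)
    subst this
    rw [mv_last j x b]
    fin_cases b <;> simp [hlast]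

lemma kerEasy (j : ℕ) : ∀ (k : ℕ), k ≤ j → ∀ (x : Fin (j+1) × Fin 2 → ℂ),
    (∀ (q : Fin (j+1)) (b : Fin 2), k ≤ (q : ℕ) → x (q, b) = 0) →
    (exampleMatrix j ^ k) *ᵥ x = 0 := by
  intro k
  induction k with
  | zero =>
    intro _ x hx
    rw [pow_zero, Matrix.one_mulVec]
    funext qb
    exact hx qb.1 qb.2 (Nat.zero_le _)
  | succ k ih =>
    intro hk x hx
    rw [pow_succ, ← Matrix.mulVec_mulVec]
    exact ih (by omega) _ (fun q b hq => supp_ge j (k+1) hk x hx q b (by omega))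

lemma isom (j : ℕ) : ∀ (k : ℕ), k ≤ j → ∀ (x : Fin (j+1) × Fin 2 → ℂ),
    (∀ (q : Fin (j+1)) (b : Fin 2), (q : ℕ) < k → x (q, b) = 0) →
    ∑ i : Fin (j+1) × Fin 2, ‖((exampleMatrix j ^ k) *ᵥ x) i‖^2 =
      ∑ i : Fin (j+1) × Fin 2, ‖x i‖^2 := by
  intro k
  induction k with
  | zero => intro _ x _; rw [pow_zero, Matrix.one_mulVec]
  | succ k ih =>
    intro hk x hx
    rw [pow_succ, ← Matrix.mulVec_mulVec]
    rw [ih (by omega) _ (fun q b hq => supp_lt j (k+1) hk x hx q b (by omega))]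
    exact key_sum j x (fun b => hx 0 b (by simp))

-- the distinguished basis vector (Fin.last j, 1), as a function
def eJ (j : ℕ) : Fin (j+1) × Fin 2 → ℂ := fun i => if i = (Fin.last j, 1) then 1 else 0

lemma eJ_apply (j : ℕ) (q : Fin (j+1)) (b : Fin 2) :
    eJ j (q, b) = if (q : ℕ) = j ∧ b = 1 then 1 else 0 := by
  simp only [eJ, Prod.mk.injEq]
  congr 1
  simp only [eq_iff_iff]
  constructor
  · rintro ⟨h, h'⟩; exact ⟨by rw [h]; simp, h'⟩
  · rintro ⟨h, h'⟩; exact ⟨Fin.eq_of_val_eq (by simpa using h), h'⟩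

lemma powS (j : ℕ) : ∀ (k : ℕ), 1 ≤ k → k ≤ j → ∀ (p : Fin (j+1)) (a : Fin 2),
    ((exampleMatrix j ^ k) *ᵥ eJ j) (p, a) =
      if (p : ℕ) + k = j ∧ a = 1 then cc
      else if (p : ℕ) + k = j + 1 ∧ a = 0 then cc else 0 := by
  intro k
  induction k with
  | zero => omega
  | succ k ih =>
    intro _ hk p a
    by_cases hk0 : k = 0
    · -- k + 1 = 1
      subst hk0
      rw [pow_one]
      rcases Nat.lt_trichotomy ((p : ℕ) + 1) j with h | h | h
      · rw [mv_lo j (eJ j) p h a, eJ_apply]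
        have h1 : ¬((p:ℕ) + 1 = j) := by omega
        have h2 : ¬((p:ℕ) + 1 = j + 1) := by omega
        simp [h1, h2, show ¬((p:ℕ) = j) by omega]
      · rw [mv_mid j (eJ j) p h a, eJ_apply, eJ_apply]
        have h2 : ¬((p:ℕ) + 1 = j + 1) := by omega
        fin_cases a <;> simp [h, h2, Fin.val_last]
      · have hpj : (p : ℕ) = j := by omega
        have hp : p = Fin.last j := Fin.eq_of_val_eq (by simpa using hpj)
        subst hp
        rw [mv_last j (eJ j) a, eJ_apply]
        simp only [Fin.val_last]
        have h2 : ¬(j + 1 = j) := by omega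
        fin_cases a <;> simp [h2]
    · -- k ≥ 1
      have hk1 : 1 ≤ k := by omega
      rw [pow_succ', ← Matrix.mulVec_mulVec]
      set y := (exampleMatrix j ^ k) *ᵥ eJ j with hy
      have hyv : ∀ (q : Fin (j+1)) (b : Fin 2), y (q, b) =
          if (q : ℕ) + k = j ∧ b = 1 then cc
          else if (q : ℕ) + k = j + 1 ∧ b = 0 then cc else 0 :=
        fun q b => ih hk1 (by omega) q b
      have hylast : y (Fin.last j, 1) = 0 := by
        rw [hyv]
        have c1 : ¬((Fin.last j : ℕ) + k = j ∧ (1:Fin 2) = 1) := by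
          rintro ⟨hc, -⟩; simp only [Fin.val_last] at hc; omega
        have c2 : ¬((Fin.last j : ℕ) + k = j + 1 ∧ (1:Fin 2) = 0) := by
          rintro ⟨-, hc⟩; exact absurd hc (by decide)
        rw [if_neg c1, if_neg c2]
      rcases Nat.lt_trichotomy ((p : ℕ) + 1) j with h | h | h
      · rw [mv_lo j y p h a, hyv]
        have e1 : ((p:ℕ) + 1 + k = j) ↔ ((p:ℕ) + (k+1) = j) := by omega
        have e2 : ((p:ℕ) + 1 + k = j + 1) ↔ ((p:ℕ) + (k+1) = j + 1) := by omega
        simp only [e1, e2]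
      · rw [mv_mid j y p h a]
        have hy0 : y (Fin.last j, 0) = if k = 1 then cc else 0 := by
          rw [hyv]
          have c1 : ¬((Fin.last j : ℕ) + k = j ∧ (0:Fin 2) = 1) := by
            rintro ⟨-, hc⟩; exact absurd hc (by decide)
          rw [if_neg c1]
          simp only [Fin.val_last]
          by_cases hko : k = 1
          · subst hko; simp
          · have : ¬(j + k = j + 1) := by omega
            simp [this, hko]
        have h2 : ¬((p:ℕ) + (k+1) = j) := by omega
        have h3 : ((p:ℕ) + (k+1) = j + 1) ↔ k = 1 := by omega
        by_cases ha : a = 0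
        · subst ha
          rw [if_pos rfl, hy0]
          simp [h2, h3]
        · have ha1 : a = 1 := Fin.eq_one_of_ne_zero a ha
          subst ha1
          rw [if_neg (by decide), hylast]
          have c1 : ¬((p:ℕ) + (k+1) = j ∧ (1:Fin 2) = 1) := fun hc => h2 hc.1
          have c2 : ¬((p:ℕ) + (k+1) = j + 1 ∧ (1:Fin 2) = 0) := by
            rintro ⟨-, hc⟩; exact absurd hc (by decide)
          rw [if_neg c1, if_neg c2]
          simp
      · have hpj : (p : ℕ) = j := by omega
        have hp : p = Fin.last j := Fin.eq_of_val_eq (by simpa using hpj)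
        subst hp
        rw [mv_last j y a]
        simp only [Fin.val_last]
        have c1 : ¬(j + (k+1) = j ∧ a = 1) := by rintro ⟨hc, -⟩; omega
        have c2 : ¬(j + (k+1) = j + 1 ∧ a = 0) := by rintro ⟨hc, -⟩; omega
        rw [if_neg c1, if_neg c2]
        by_cases ha : a = 0
        · subst ha; rw [if_pos rfl, hylast, mul_zero]
        · have ha1 : a = 1 := Fin.eq_one_of_ne_zero a ha
          subst ha1; rw [if_neg (by decide)]

lemma cc_ne : cc ≠ 0 := by
  have h : Real.sqrt 2 ≠ 0 := ne_of_gt (Real.sqrt_pos.mpr (by norm_num))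
  simp [cc, h]

lemma powTop (j : ℕ) : ((exampleMatrix j ^ (j+1)) *ᵥ eJ j) =
    fun i => if i = ((0 : Fin (j+1)), (0 : Fin 2)) then cc else 0 := by
  funext i
  obtain ⟨p, a⟩ := i
  have hpair : ((p, a) = ((0 : Fin (j+1)), (0 : Fin 2))) ↔ ((p:ℕ) = 0 ∧ a = 0) := by
    rw [Prod.mk.injEq]
    constructor
    · rintro ⟨h, h'⟩; exact ⟨by rw [h]; simp, h'⟩
    · rintro ⟨h, h'⟩; exact ⟨Fin.eq_of_val_eq (by simpa using h), h'⟩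
  rcases Nat.eq_zero_or_pos j with hj | hj
  · subst hj
    rw [pow_one]
    have hp0 : p = Fin.last 0 := Fin.eq_of_val_eq (by omega)
    subst hp0
    rw [mv_last 0 (eJ 0) a, eJ_apply]
    by_cases ha : a = 0
    · subst ha; simp [hpair]
    · have ha1 : a = 1 := Fin.eq_one_of_ne_zero a ha
      subst ha1
      simp [hpair]
  · rw [pow_succ', ← Matrix.mulVec_mulVec]
    set y := (exampleMatrix j ^ j) *ᵥ eJ j with hy
    have hyv : ∀ (q : Fin (j+1)) (b : Fin 2), y (q, b) =
        if (q : ℕ) + j = j ∧ b = 1 then cc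
        else if (q : ℕ) + j = j + 1 ∧ b = 0 then cc else 0 :=
      fun q b => powS j j hj le_rfl q b
    have hylast1 : y (Fin.last j, 1) = 0 := by
      rw [hyv]
      have c1 : ¬((Fin.last j : ℕ) + j = j ∧ (1:Fin 2) = 1) := by
        rintro ⟨hc, -⟩; simp only [Fin.val_last] at hc; omega
      have c2 : ¬((Fin.last j : ℕ) + j = j + 1 ∧ (1:Fin 2) = 0) := by
        rintro ⟨-, hc⟩; exact absurd hc (by decide)
      rw [if_neg c1, if_neg c2]
    have hylast0 : y (Fin.last j, 0) = if j = 1 then cc else 0 := by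
      rw [hyv]
      have c1 : ¬((Fin.last j : ℕ) + j = j ∧ (0:Fin 2) = 1) := by
        rintro ⟨-, hc⟩; exact absurd hc (by decide)
      rw [if_neg c1]
      simp only [Fin.val_last]
      by_cases hj1 : j = 1
      · subst hj1; simp
      · have : ¬(j + j = j + 1) := by omega
        simp [this, hj1]
    rcases Nat.lt_trichotomy ((p : ℕ) + 1) j with h | h | h
    · rw [mv_lo j y p h a, hyv]
      have c1 : ¬(((p:ℕ) + 1) + j = j ∧ a = 1) := by rintro ⟨hc, -⟩; omega
      rw [if_neg c1]
      have e2 : (((p:ℕ) + 1) + j = j + 1) ↔ (p:ℕ) = 0 := by omega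
      by_cases hp0 : (p:ℕ) = 0
      · by_cases ha : a = 0
        · subst ha
          rw [if_pos ⟨e2.mpr hp0, rfl⟩, if_pos (hpair.mpr ⟨hp0, rfl⟩)]
        · have ha1 : a = 1 := Fin.eq_one_of_ne_zero a ha
          subst ha1
          rw [if_neg (by rintro ⟨-, hc⟩; exact absurd hc (by decide))]
          rw [if_neg (by rw [hpair]; rintro ⟨-, hc⟩; exact absurd hc (by decide))]
      · rw [if_neg (by rintro ⟨hc, -⟩; exact hp0 (e2.mp hc))]
        rw [if_neg (by rw [hpair]; rintro ⟨hc, -⟩; exact hp0 hc)]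
    · rw [mv_mid j y p h a]
      have hpj : ((p:ℕ) = 0) ↔ j = 1 := by omega
      by_cases ha : a = 0
      · subst ha
        rw [if_pos rfl, hylast0]
        by_cases hj1 : j = 1
        · rw [if_pos hj1, if_pos (hpair.mpr ⟨hpj.mpr hj1, rfl⟩)]
        · rw [if_neg hj1, if_neg (by rw [hpair]; rintro ⟨hc, -⟩; exact hj1 (hpj.mp hc))]
      · have ha1 : a = 1 := Fin.eq_one_of_ne_zero a ha
        subst ha1
        rw [if_neg (by decide), hylast1, mul_zero]
        rw [if_neg (by rw [hpair]; rintro ⟨-, hc⟩; exact absurd hc (by decide))]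
    · have hp : p = Fin.last j := Fin.eq_of_val_eq (by simp; omega)
      subst hp
      rw [mv_last j y a]
      have hne : ¬((Fin.last j, a) = ((0 : Fin (j+1)), (0 : Fin 2))) := by
        rw [hpair]; rintro ⟨hc, -⟩; simp only [Fin.val_last] at hc; omega
      rw [if_neg hne]
      by_cases ha : a = 0
      · subst ha; rw [if_pos rfl, hylast1, mul_zero]
      · have ha1 : a = 1 := Fin.eq_one_of_ne_zero a ha
        subst ha1; rw [if_neg (by decide)]

lemma kerHard (j k : ℕ) (hk : k ≤ j) (x : Fin (j+1) × Fin 2 → ℂ)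
    (hx : (exampleMatrix j ^ k) *ᵥ x = 0) :
    ∀ (q : Fin (j+1)) (b : Fin 2), k ≤ (q : ℕ) → x (q, b) = 0 := by
  set v : Fin (j+1) × Fin 2 → ℂ := fun i => if k ≤ (i.1 : ℕ) then x i else 0 with hv
  set u : Fin (j+1) × Fin 2 → ℂ := fun i => if k ≤ (i.1 : ℕ) then 0 else x i with hu
  have hxuv : x = u + v := by
    funext i; simp only [hu, hv, Pi.add_apply]; split_ifs <;> ring
  have hu0 : (exampleMatrix j ^ k) *ᵥ u = 0 := by
    apply kerEasy j k hk
    intro q b hq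
    simp only [hu]
    rw [if_pos hq]
  have hv0 : (exampleMatrix j ^ k) *ᵥ v = 0 := by
    rw [hxuv, Matrix.mulVec_add, hu0, zero_add] at hx
    exact hx
  have hsum := isom j k hk v (by
    intro q b hq
    simp only [hv]
    rw [if_neg (by simpa using Nat.not_le.mpr hq)])
  rw [hv0] at hsum
  have hzero : ∑ i : Fin (j+1) × Fin 2, ‖v i‖^2 = 0 := by
    rw [← hsum]; simp
  have hvz : ∀ i, v i = 0 := by
    intro i
    have h := (Finset.sum_eq_zero_iff_of_nonneg
      (fun i _ => by positivity)).mp hzero i (Finset.mem_univ i)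
    simpa using h
  intro q b hq
  have := hvz (q, b)
  simp only [hv] at this
  rwa [if_pos hq] at this

lemma kerTopIff (j : ℕ) (x : Fin (j+1) × Fin 2 → ℂ) :
    (exampleMatrix j ^ (j+1)) *ᵥ x = 0 ↔ x (Fin.last j, 1) = 0 := by
  have hkey : (exampleMatrix j ^ (j+1)) *ᵥ x =
      x (Fin.last j, 1) • ((exampleMatrix j ^ (j+1)) *ᵥ eJ j) := by
    have hxv : x = (fun i => x i - x (Fin.last j, 1) * eJ j i) + x (Fin.last j, 1) • eJ j := by
      funext i; simp only [Pi.add_apply, Pi.smul_apply, smul_eq_mul]; ring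
    set v : Fin (j+1) × Fin 2 → ℂ := fun i => x i - x (Fin.last j, 1) * eJ j i with hv
    have hv1 : v (Fin.last j, 1) = 0 := by simp [hv, eJ]
    have hAv : (exampleMatrix j ^ (j+1)) *ᵥ v = 0 := by
      rw [pow_succ, ← Matrix.mulVec_mulVec]
      apply kerEasy j j le_rfl
      intro q b hq
      have hql : q = Fin.last j := Fin.eq_of_val_eq (by simp; omega)
      subst hql
      rw [mv_last j v b]
      by_cases hb : b = 0
      · subst hb; rw [if_pos rfl, hv1, mul_zero]
      · rw [if_neg hb]
    calc (exampleMatrix j ^ (j+1)) *ᵥ x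
        = (exampleMatrix j ^ (j+1)) *ᵥ (v + x (Fin.last j, 1) • eJ j) := by rw [← hxv]
      _ = (exampleMatrix j ^ (j+1)) *ᵥ v +
            x (Fin.last j, 1) • ((exampleMatrix j ^ (j+1)) *ᵥ eJ j) := by
            rw [Matrix.mulVec_add, Matrix.mulVec_smul]
      _ = x (Fin.last j, 1) • ((exampleMatrix j ^ (j+1)) *ᵥ eJ j) := by rw [hAv, zero_add]
  rw [hkey, powTop]
  constructor
  · intro h
    have := congrFun h ((0 : Fin (j+1)), (0 : Fin 2))
    simp only [Pi.smul_apply, if_pos rfl, Pi.zero_apply, smul_eq_mul] at this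
    exact (mul_eq_zero.mp this).resolve_right cc_ne
  · intro h; rw [h, zero_smul]

lemma kerSucc (j : ℕ) (k : ℕ) : ∀ (x : Fin (j+1) × Fin 2 → ℂ),
    (exampleMatrix j ^ (j+2+k)) *ᵥ x = 0 := by
  induction k with
  | zero =>
    intro x
    rw [show j+2+0 = (j+1)+1 from rfl, pow_succ, ← Matrix.mulVec_mulVec]
    rw [kerTopIff]
    rw [mv_last j x 1, if_neg (by decide)]
  | succ k ih =>
    intro x
    rw [show j+2+(k+1) = (j+2+k)+1 from rfl, pow_succ, ← Matrix.mulVec_mulVec]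
    exact ih _

lemma mem_ker_iff (j : ℕ) (M : Matrix (Fin (j+1) × Fin 2) (Fin (j+1) × Fin 2) ℂ)
    (y : EuclideanSpace ℂ (Fin (j+1) × Fin 2)) :
    y ∈ LinearMap.ker (Matrix.toEuclideanLin M) ↔ M *ᵥ y = 0 := by
  rw [LinearMap.mem_ker, Matrix.toEuclideanLin_apply]
  constructor <;> intro h
  · simpa using congrArg WithLp.ofLp h
  · simp [h]

lemma norm_toEuc (j : ℕ) (M : Matrix (Fin (j+1) × Fin 2) (Fin (j+1) × Fin 2) ℂ)
    (x : EuclideanSpace ℂ (Fin (j+1) × Fin 2)) :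
    ‖Matrix.toEuclideanLin M x‖ =
      Real.sqrt (∑ i : Fin (j+1) × Fin 2, ‖(M *ᵥ x) i‖^2) :=
  EuclideanSpace.norm_eq _

lemma PI_pow (j i : ℕ) (hi : i ≤ j) : (exampleMatrix j ^ i).IsPartialIsometry := by
  intro x hx
  have hx0 : ∀ (q : Fin (j+1)) (b : Fin 2), (q : ℕ) < i → x (q, b) = 0 := by
    intro q b hq
    have hker : EuclideanSpace.single (q, b) (1:ℂ) ∈
        LinearMap.ker (Matrix.toEuclideanLin (exampleMatrix j ^ i)) := by
      rw [mem_ker_iff]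
      apply kerEasy j i hi
      intro q' b' hq'
      rw [EuclideanSpace.single_apply]
      apply if_neg
      intro hEq
      rw [Prod.mk.injEq] at hEq
      have : (q' : ℕ) = (q : ℕ) := by rw [hEq.1]
      omega
    have h0 := (Submodule.mem_orthogonal _ x).mp hx _ hker
    rw [EuclideanSpace.inner_single_left] at h0
    simpa using h0
  rw [norm_toEuc, EuclideanSpace.norm_eq]
  exact congrArg Real.sqrt (isom j i hi x hx0)

lemma notPI (j : ℕ) : ¬ (exampleMatrix j ^ (j+1)).IsPartialIsometry := by
  intro hPI
  set E : EuclideanSpace ℂ (Fin (j+1) × Fin 2) :=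
    EuclideanSpace.single (Fin.last j, 1) (1:ℂ) with hE
  have hEfun : ∀ i, E i = eJ j i := by
    intro i
    rw [hE, EuclideanSpace.single_apply]
    rfl
  have hmem : E ∈ (LinearMap.ker (Matrix.toEuclideanLin (exampleMatrix j ^ (j+1))))ᗮ := by
    rw [Submodule.mem_orthogonal]
    intro u hu
    rw [mem_ker_iff] at hu
    have hu1 : u (Fin.last j, 1) = 0 := (kerTopIff j u).mp hu
    rw [hE, EuclideanSpace.inner_single_right, hu1]
    simp
  have hnorm := hPI E hmem
  rw [norm_toEuc] at hnorm
  have hEeq : (exampleMatrix j ^ (j+1)) *ᵥ E = (exampleMatrix j ^ (j+1)) *ᵥ eJ j :=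
    congrArg (fun v => (exampleMatrix j ^ (j+1)) *ᵥ v) (funext hEfun)
  rw [hEeq, powTop] at hnorm
  have hsum : ∑ i : Fin (j+1) × Fin 2,
      ‖(fun i => if i = ((0 : Fin (j+1)), (0 : Fin 2)) then cc else 0) i‖^2 = 1/2 := by
    rw [Finset.sum_congr rfl (fun i _ => by
      show ‖if i = ((0 : Fin (j+1)), (0 : Fin 2)) then cc else 0‖^2 =
        if i = ((0 : Fin (j+1)), (0 : Fin 2)) then 1/2 else 0
      split_ifs with h
      · rw [cc_norm_sq]
      · simp)]
    simp
  rw [hsum] at hnorm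
  have hEnorm : ‖E‖ = 1 := by rw [hE, EuclideanSpace.norm_single]; simp
  rw [hEnorm] at hnorm
  have : (1/2 : ℝ) = 1 := by
    have h1 : Real.sqrt (1/2) ^ 2 = 1/2 := Real.sq_sqrt (by norm_num)
    rw [hnorm] at h1
    simpa using h1.symm
  norm_num at this

/-- For any `j ≥ 0`, the example matrix above (of size `n = 2j + 2`) has `p(A) = j` and
`a(A) = j + 2`. -/
theorem pIndex_ascent_exampleMatrix (j : ℕ) :
    (exampleMatrix j).pIndex = (j : ℕ∞) ∧ (exampleMatrix j).ascent = j + 2 := by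
  constructor
  · apply le_antisymm
    · apply sSup_le
      rintro a ⟨m, hm, rfl⟩
      simp only [Nat.cast_le]
      by_contra h
      exact notPI j (hm (j+1) (by omega))
    · apply le_sSup
      exact ⟨j, fun i hi => PI_pow j i hi, rfl⟩
  · apply le_antisymm
    · apply Nat.sInf_le
      show LinearMap.ker (Matrix.toEuclideanLin (exampleMatrix j ^ (j+2))) =
        LinearMap.ker (Matrix.toEuclideanLin (exampleMatrix j ^ (j+2+1)))
      ext y
      rw [mem_ker_iff, mem_ker_iff]
      constructor
      · intro _; exact kerSucc j 1 y
      · intro _; exact kerSucc j 0 y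
    · apply le_csInf ⟨j+2, by
        show LinearMap.ker (Matrix.toEuclideanLin (exampleMatrix j ^ (j+2))) =
          LinearMap.ker (Matrix.toEuclideanLin (exampleMatrix j ^ (j+2+1)))
        ext y
        rw [mem_ker_iff, mem_ker_iff]
        constructor
        · intro _; exact kerSucc j 1 y
        · intro _; exact kerSucc j 0 y⟩
      intro k hk
      by_contra h
      push_neg at h
      have hk2 : k ≤ j + 1 := by omega
      have hkeq : LinearMap.ker (Matrix.toEuclideanLin (exampleMatrix j ^ k)) =
          LinearMap.ker (Matrix.toEuclideanLin (exampleMatrix j ^ (k+1))) := hk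
      rcases Nat.lt_trichotomy k j with hlt | heq | hgt
      · -- k < j : witness single (k, 0)
        set w : EuclideanSpace ℂ (Fin (j+1) × Fin 2) :=
          EuclideanSpace.single ((⟨k, by omega⟩ : Fin (j+1)), (0 : Fin 2)) (1:ℂ) with hw
        have hw1 : w ∈ LinearMap.ker (Matrix.toEuclideanLin (exampleMatrix j ^ (k+1))) := by
          rw [mem_ker_iff]
          apply kerEasy j (k+1) (by omega)
          intro q b hq
          rw [hw, EuclideanSpace.single_apply]
          apply if_neg
          intro hEq
          rw [Prod.mk.injEq] at hEq
          have : (q : ℕ) = k := by rw [hEq.1]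
          omega
        rw [← hkeq, mem_ker_iff] at hw1
        have := kerHard j k (by omega) w hw1 ⟨k, by omega⟩ 0 (by simp)
        rw [hw, EuclideanSpace.single_apply, if_pos rfl] at this
        exact one_ne_zero this
      · -- k = j : witness single (last, 0)
        subst heq
        set w : EuclideanSpace ℂ (Fin (k+1) × Fin 2) :=
          EuclideanSpace.single (Fin.last k, (0 : Fin 2)) (1:ℂ) with hw
        have hw1 : w ∈ LinearMap.ker (Matrix.toEuclideanLin (exampleMatrix k ^ (k+1))) := by
          rw [mem_ker_iff, kerTopIff]
          rw [hw, EuclideanSpace.single_apply]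
          apply if_neg
          simp
        rw [← hkeq, mem_ker_iff] at hw1
        have := kerHard k k le_rfl w hw1 (Fin.last k) 0 (by simp)
        rw [hw, EuclideanSpace.single_apply, if_pos rfl] at this
        exact one_ne_zero this
      · -- k = j + 1 : witness single (last, 1)
        have hkj : k = j + 1 := by omega
        subst hkj
        set w : EuclideanSpace ℂ (Fin (j+1) × Fin 2) :=
          EuclideanSpace.single (Fin.last j, (1 : Fin 2)) (1:ℂ) with hw
        have hw1 : w ∈ LinearMap.ker (Matrix.toEuclideanLin (exampleMatrix j ^ (j+1+1))) := by
          rw [mem_ker_iff]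
          exact kerSucc j 0 w
        rw [← hkeq, mem_ker_iff, kerTopIff] at hw1
        rw [hw, EuclideanSpace.single_apply, if_pos rfl] at hw1
        exact one_ne_zero hw1

end
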